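/- Let 0 ≤ t ≤ f ≤ n, let F be a flag of size f with t labeled vertices, let Θ: {1,…,t} → {1,…,n} be injective, and fix any h* ∈ Inj_Θ(F). Let x^m := Π_{{a,b} ∈ E(F)} x_{h*(a)h*(b)}, and let H ≤ S_n be the subgroup of all permutations of {1,…,n} that fix Θ(i) for every 1 ≤ i ≤ t (so |H| = (n−t)!). Then g_F^Θ = ((n−t)!/(n−f)!) · (1/|H|) Σ_{σ ∈ H} σ·x^m; equivalently, (n−f)! · g_F^Θ = Σ_{σ ∈ H} σ·x^m. -/

import Mathlib

open MvPolynomial Finset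
open scoped Classical

noncomputable section

abbrev PolyRing (n : ℕ) := MvPolynomial (Sym2 (Fin n)) ℝ

def xe {n : ℕ} (i j : Fin n) : PolyRing n := X s(i, j)

def permAct {n : ℕ} (σ : Equiv.Perm (Fin n)) : PolyRing n →ₐ[ℝ] PolyRing n :=
  MvPolynomial.rename (Sym2.map σ)

def injOn (t f n : ℕ) (htf : t ≤ f) (Θ : Fin t → Fin n) : Finset (Fin f → Fin n) :=
  Finset.univ.filter fun h => Function.Injective h ∧ ∀ i : Fin t, h (Fin.castLE htf i) = Θ i

def edgePairs {f : ℕ} (F : SimpleGraph (Fin f)) : Finset (Fin f × Fin f) :=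
  Finset.univ.filter fun p => p.1 < p.2 ∧ F.Adj p.1 p.2

def gF {t f n : ℕ} (htf : t ≤ f) (F : SimpleGraph (Fin f)) (Θ : Fin t → Fin n) : PolyRing n :=
  ∑ h ∈ injOn t f n htf Θ, ∏ p ∈ edgePairs F, xe (h p.1) (h p.2)

lemma card_fixing (n : ℕ) (g : Fin n → Prop) :
    (Finset.univ.filter (fun σ : Equiv.Perm (Fin n) => ∀ a, g a → σ a = a)).card
      = (Fintype.card {a : Fin n // ¬ g a}).factorial := by
  rw [← Fintype.card_perm, ← Fintype.card_coe]
  refine Fintype.card_congr ?_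
  refine (Equiv.subtypeEquivRight ?_).trans
    ((Equiv.Perm.subtypeEquivSubtypePerm (fun a : Fin n => ¬ g a)).symm.trans (Equiv.refl _))
  intro σ
  simp only [Finset.mem_filter, Finset.mem_univ, true_and]
  constructor
  · intro h a ha; exact h a (not_not.mp ha)
  · intro h a ha; exact h a (not_not.mpr ha)

lemma card_fix_comp {n f : ℕ} (hfn : f ≤ n) (u : Fin f → Fin n) (hu : Function.Injective u) :
    (Finset.univ.filter (fun σ : Equiv.Perm (Fin n) => σ ∘ u = u)).card
      = (n - f).factorial := by
  have h1 : (Finset.univ.filter (fun σ : Equiv.Perm (Fin n) => σ ∘ u = u))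
      = Finset.univ.filter (fun σ : Equiv.Perm (Fin n) =>
          ∀ a, a ∈ Set.range u → σ a = a) := by
    apply Finset.filter_congr
    intro σ _
    constructor
    · rintro h a ⟨b, rfl⟩; exact congrFun h b
    · intro h; funext b; exact h (u b) ⟨b, rfl⟩
  rw [h1]
  convert card_fixing n (fun a => a ∈ Set.range u) using 2
  · congr!
  · rw [eq_comm, Fintype.card_subtype_compl, Fintype.card_fin,
        Fintype.card_congr (Equiv.ofInjective u hu).symm, Fintype.card_fin]

lemma exists_perm_comp {n f : ℕ} (u v : Fin f → Fin n)
    (hu : Function.Injective u) (hv : Function.Injective v) :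
    ∃ σ : Equiv.Perm (Fin n), σ ∘ u = v := by
  let e : {x : Fin n // x ∈ Set.range u} ≃ {x : Fin n // x ∈ Set.range v} :=
    (Equiv.ofInjective u hu).symm.trans (Equiv.ofInjective v hv)
  refine ⟨e.extendSubtype, funext fun a => ?_⟩
  rw [Function.comp_apply, Equiv.extendSubtype_apply_of_mem e (u a) ⟨a, rfl⟩]
  show ((Equiv.ofInjective v hv) ((Equiv.ofInjective u hu).symm ⟨u a, ⟨a, rfl⟩⟩) : Fin n) = v a
  have : (Equiv.ofInjective u hu).symm ⟨u a, ⟨a, rfl⟩⟩ = a := by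
    apply (Equiv.ofInjective u hu).injective; simp
  rw [this]; rfl

lemma card_fiber {n f : ℕ} (hfn : f ≤ n) (u v : Fin f → Fin n)
    (hu : Function.Injective u) (hv : Function.Injective v) :
    (Finset.univ.filter (fun σ : Equiv.Perm (Fin n) => σ ∘ u = v)).card
      = (n - f).factorial := by
  obtain ⟨σ₀, hσ₀⟩ := exists_perm_comp u v hu hv
  rw [← card_fix_comp hfn u hu]
  apply Finset.card_bij' (fun σ _ => σ₀⁻¹ * σ) (fun τ _ => σ₀ * τ)
  · intro σ hσ
    simp only [Finset.mem_filter, Finset.mem_univ, true_and] at hσ ⊢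
    funext a
    have h1 := congrFun hσ a
    have h2 := congrFun hσ₀ a
    simp only [Function.comp_apply] at h1 h2
    show σ₀⁻¹ (σ (u a)) = u a
    rw [h1, ← h2, Equiv.Perm.inv_def, Equiv.symm_apply_apply]
  · intro τ hτ
    simp only [Finset.mem_filter, Finset.mem_univ, true_and] at hτ ⊢
    funext a
    have h1 := congrFun hτ a
    have h2 := congrFun hσ₀ a
    simp only [Function.comp_apply] at h1 h2
    show σ₀ (τ (u a)) = v a
    rw [h1, h2]
  · intro σ _; group
  · intro τ _; group

theorem stmt4 (n t f : ℕ) (htf : t ≤ f) (hfn : f ≤ n)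
    (F : SimpleGraph (Fin f))
    (Θ : Fin t → Fin n) (hΘ : Function.Injective Θ)
    (hstar : Fin f → Fin n) (hmem : hstar ∈ injOn t f n htf Θ)
    -- `H ≤ S_n` is the subgroup of permutations fixing `Θ(i)` for every `i`
    (H : Finset (Equiv.Perm (Fin n)))
    (hH : H = Finset.univ.filter (fun σ : Equiv.Perm (Fin n) => ∀ i : Fin t, σ (Θ i) = Θ i))
    -- `x^m` is the monomial of `F` built from `h*`
    (xm : PolyRing n) (hxm : xm = ∏ p ∈ edgePairs F, xe (hstar p.1) (hstar p.2)) :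
    gF htf F Θ =
      (((n - t).factorial : ℝ) / ((n - f).factorial : ℝ)) •
        (((H.card : ℝ))⁻¹ • ∑ σ ∈ H, permAct σ xm) ∧
    ((n - f).factorial : ℝ) • gF htf F Θ = ∑ σ ∈ H, permAct σ xm := by
  have htn : t ≤ n := htf.trans hfn
  obtain ⟨-, hs, hth⟩ : hstar ∈ Finset.univ ∧ Function.Injective hstar ∧
      ∀ i : Fin t, hstar (Fin.castLE htf i) = Θ i := by
    simpa [injOn, Finset.mem_filter] using hmem
  set m : (Fin f → Fin n) → PolyRing n :=
    fun h => ∏ p ∈ edgePairs F, xe (h p.1) (h p.2) with hm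
  -- action on the monomial
  have key1 : ∀ σ : Equiv.Perm (Fin n), permAct σ xm = m (σ ∘ hstar) := by
    intro σ
    rw [hxm]
    simp only [permAct, map_prod, xe, rename_X, Sym2.map_pair_eq, hm, Function.comp_apply]
  -- H card
  have cardH : H.card = (n - t).factorial := by
    rw [hH]
    have h1 : (Finset.univ.filter (fun σ : Equiv.Perm (Fin n) => ∀ i : Fin t, σ (Θ i) = Θ i))
        = Finset.univ.filter (fun σ : Equiv.Perm (Fin n) => σ ∘ Θ = Θ) := by
      apply Finset.filter_congr
      intro σ _
      constructor
      · intro h; funext i; exact h i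
      · intro h i; exact congrFun h i
    rw [h1]
    exact card_fix_comp htn Θ hΘ
  -- the main sum identity (with ℕ-smul)
  have key2 : ∑ σ ∈ H, permAct σ xm = (n - f).factorial • gF htf F Θ := by
    calc ∑ σ ∈ H, permAct σ xm = ∑ σ ∈ H, m (σ ∘ hstar) := by
          exact Finset.sum_congr rfl fun σ _ => key1 σ
      _ = ∑ h ∈ injOn t f n htf Θ,
            ∑ σ ∈ H.filter (fun σ : Equiv.Perm (Fin n) => ⇑σ ∘ hstar = h), m (⇑σ ∘ hstar) := by
          refine (Finset.sum_fiberwise_of_maps_to ?_ (fun σ : Equiv.Perm (Fin n) => m (⇑σ ∘ hstar))).symm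
          intro σ hσ
          rw [hH, Finset.mem_filter] at hσ
          simp only [injOn, Finset.mem_filter, Finset.mem_univ, true_and]
          refine ⟨σ.injective.comp hs, fun i => ?_⟩
          simp only [Function.comp_apply, hth i]
          exact hσ.2 i
      _ = ∑ h ∈ injOn t f n htf Θ, (n - f).factorial • m h := by
          refine Finset.sum_congr rfl fun h hmem2 => ?_
          obtain ⟨-, hinj, hval⟩ : h ∈ Finset.univ ∧ Function.Injective h ∧
              ∀ i : Fin t, h (Fin.castLE htf i) = Θ i := by
            simpa [injOn, Finset.mem_filter] using hmem2
          have hcong : ∀ σ ∈ H.filter (fun σ : Equiv.Perm (Fin n) => ⇑σ ∘ hstar = h),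
              m (⇑σ ∘ hstar) = m h := by
            intro σ hσ; rw [Finset.mem_filter] at hσ; rw [hσ.2]
          rw [Finset.sum_congr rfl hcong, Finset.sum_const]
          congr 1
          have hfilt : H.filter (fun σ : Equiv.Perm (Fin n) => ⇑σ ∘ hstar = h)
              = Finset.univ.filter (fun σ : Equiv.Perm (Fin n) => σ ∘ hstar = h) := by
            rw [hH]
            ext σ
            simp only [Finset.mem_filter, Finset.mem_univ, true_and]
            constructor
            · rintro ⟨-, h2⟩; exact h2
            · intro h2
              refine ⟨fun i => ?_, h2⟩
              have := congrFun h2 (Fin.castLE htf i)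
              simp only [Function.comp_apply, hth i, hval i] at this
              exact this
          rw [hfilt]
          exact card_fiber hfn hstar h hs hinj
      _ = (n - f).factorial • gF htf F Θ := by
          rw [gF, Finset.smul_sum]
  have key2' : ((n - f).factorial : ℝ) • gF htf F Θ = ∑ σ ∈ H, permAct σ xm := by
    rw [key2, Nat.cast_smul_eq_nsmul]
  refine ⟨?_, key2'⟩
  rw [← key2', cardH, smul_smul, smul_smul]
  have h1 : ((n - t).factorial : ℝ) ≠ 0 := Nat.cast_ne_zero.mpr (Nat.factorial_ne_zero _)
  have h2 : ((n - f).factorial : ℝ) ≠ 0 := Nat.cast_ne_zero.mpr (Nat.factorial_ne_zero _)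
  rw [show ((n - t).factorial : ℝ) / ((n - f).factorial : ℝ) *
      (((n - t).factorial : ℝ))⁻¹ * ((n - f).factorial : ℝ) = 1 by field_simp, one_smul]

end
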